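/- Let f, g and h be entire functions given by everywhere absolutely convergent vector valued Dirichlet series, and let p ≥ 0, q ≥ 0, m ≥ 0 be integers. Assume 0 < λ_h^{(m,q)}(f) ≤ ρ_h^{(m,q)}(f) < +∞, 0 < λ_h^{(m,p)}(g) ≤ ρ_h^{(m,p)}(g) < +∞, and that the indicators Δ̄_h^{(m,q)}(f), Δ_h^{(m,p)}(g), τ̄_h^{(m,p)}(g) are all positive and finite. Then τ_g^{(p,q)}(f) ≥ max{ (Δ̄_h^{(m,q)}(f)/Δ_h^{(m,p)}(g))^{1/ρ_h^{(m,p)}(g)}, (Δ̄_h^{(m,q)}(f)/τ̄_h^{(m,p)}(g))^{1/λ_h^{(m,p)}(g)} }. -/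

import Mathlib

open Filter Topology

noncomputable section

/-- An entire function given by an everywhere absolutely convergent
vector valued Dirichlet series, with coefficients in a Banach space `E`. -/
structure VVDS (E : Type*) [NormedAddCommGroup E] [NormedSpace ℂ E] [CompleteSpace E] where
  a : ℕ → E
  lam : ℕ → ℝ
  lam_pos : ∀ n, 0 < lam n
  lam_strictMono : StrictMono lam
  lam_tendsto : Tendsto lam atTop atTop
  log_index_bound : ∃ D : ℝ, ∀ᶠ n : ℕ in atTop, Real.log (n : ℝ) / lam n ≤ D
  coeff_decay : Tendsto (fun n => Real.log ‖a n‖ / lam n) atTop atBot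
  abs_conv : ∀ s : ℂ, Summable (fun n => Real.exp (s.re * lam n) * ‖a n‖)

variable {E F G : Type*} [NormedAddCommGroup E] [NormedSpace ℂ E] [CompleteSpace E]
  [NormedAddCommGroup F] [NormedSpace ℂ F] [CompleteSpace F]
  [NormedAddCommGroup G] [NormedSpace ℂ G] [CompleteSpace G]

/-- The entire function defined by the vector valued Dirichlet series. -/
def VVDS.toFun (f : VVDS E) (s : ℂ) : E := ∑' n, Complex.exp (s * (f.lam n : ℂ)) • f.a n

/-- The maximum modulus function `M_f(σ) = sup_t ‖f(σ+it)‖`. -/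
def VVDS.M (f : VVDS E) (σ : ℝ) : ℝ := ⨆ t : ℝ, ‖f.toFun ((σ : ℂ) + (t : ℂ) * Complex.I)‖

/-- The inverse function of the maximum modulus function. -/
def VVDS.Minv (f : VVDS E) (y : ℝ) : ℝ := sInf {σ : ℝ | y ≤ f.M σ}

/-- The (p,q)-th relative Ritt order of `f` with respect to `g`. -/
def relRittOrder (p q : ℕ) (f : VVDS E) (g : VVDS F) : EReal :=
  limsup (fun σ : ℝ =>
    ((Real.log^[p] (g.Minv (f.M σ)) / Real.log^[q] σ : ℝ) : EReal)) atTop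

/-- The (p,q)-th relative Ritt lower order of `f` with respect to `g`. -/
def relRittLowerOrder (p q : ℕ) (f : VVDS E) (g : VVDS F) : EReal :=
  liminf (fun σ : ℝ =>
    ((Real.log^[p] (g.Minv (f.M σ)) / Real.log^[q] σ : ℝ) : EReal)) atTop

/-- The (p,q)-th relative Ritt type of `f` with respect to `g`. -/
def relRittType (p q : ℕ) (f : VVDS E) (g : VVDS F) : EReal :=
  limsup (fun σ : ℝ =>
    ((Real.log^[p-1] (g.Minv (f.M σ)) /
      (Real.log^[q-1] σ) ^ (relRittOrder p q f g).toReal : ℝ) : EReal)) atTop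

/-- The (p,q)-th relative Ritt lower type of `f` with respect to `g`. -/
def relRittLowerType (p q : ℕ) (f : VVDS E) (g : VVDS F) : EReal :=
  liminf (fun σ : ℝ =>
    ((Real.log^[p-1] (g.Minv (f.M σ)) /
      (Real.log^[q-1] σ) ^ (relRittOrder p q f g).toReal : ℝ) : EReal)) atTop

/-- The (p,q)-th relative Ritt weak type of `f` with respect to `g`. -/
def relRittWeakType (p q : ℕ) (f : VVDS E) (g : VVDS F) : EReal :=
  liminf (fun σ : ℝ =>
    ((Real.log^[p-1] (g.Minv (f.M σ)) /
      (Real.log^[q-1] σ) ^ (relRittLowerOrder p q f g).toReal : ℝ) : EReal)) atTop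

/-- The growth indicator `τ̄_g^{(p,q)}(f)`. -/
def relRittUpperWeakType (p q : ℕ) (f : VVDS E) (g : VVDS F) : EReal :=
  limsup (fun σ : ℝ =>
    ((Real.log^[p-1] (g.Minv (f.M σ)) /
      (Real.log^[q-1] σ) ^ (relRittLowerOrder p q f g).toReal : ℝ) : EReal)) atTop


namespace Stage1

/-- tower of exponentials -/
def tw : ℕ → ℝ
  | 0 => 1
  | (k+1) => Real.exp (tw k)

lemma tw_ge_one : ∀ k, (1:ℝ) ≤ tw k
  | 0 => le_refl 1
  | (k+1) => by
    have := tw_ge_one k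
    have : (0:ℝ) ≤ tw k := by linarith
    calc (1:ℝ) = Real.exp 0 := by simp
    _ ≤ Real.exp (tw k) := Real.exp_le_exp.mpr this
    _ = tw (k+1) := rfl

lemma tw_pos (k : ℕ) : (0:ℝ) < tw k := lt_of_lt_of_le one_pos (tw_ge_one k)

lemma le_log_of_tw {k : ℕ} {x : ℝ} (hx : tw (k+1) ≤ x) : tw k ≤ Real.log x := by
  have h1 : Real.exp (tw k) ≤ x := hx
  exact (Real.le_log_iff_exp_le (lt_of_lt_of_le (Real.exp_pos _) h1)).mpr h1

lemma tw_le_succ (k : ℕ) : tw k ≤ tw (k+1) := by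
  have h1 := Real.add_one_le_exp (tw k)
  have h2 : tw (k+1) = Real.exp (tw k) := rfl
  linarith

lemma itlog_mono : ∀ (k : ℕ) {x y : ℝ}, tw k ≤ x → x ≤ y → Real.log^[k] x ≤ Real.log^[k] y
  | 0, x, y, _, hxy => hxy
  | (k+1), x, y, hx, hxy => by
    rw [Function.iterate_succ_apply, Function.iterate_succ_apply]
    refine itlog_mono k (le_log_of_tw hx) ?_
    exact Real.log_le_log (lt_of_lt_of_le (tw_pos (k+1)) hx) hxy

lemma itlog_ge_tw : ∀ (k : ℕ) {x : ℝ}, tw (k+1) ≤ x → tw 1 ≤ Real.log^[k] x := by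
  intro k
  induction k with
  | zero => intro x hx; simpa using hx
  | succ k ih =>
    intro x hx
    rw [Function.iterate_succ_apply]
    refine ih ?_
    exact le_log_of_tw (k := k+1) hx

lemma itlog_tendsto (k : ℕ) : Tendsto (Real.log^[k]) atTop atTop := by
  induction k with
  | zero => simpa using tendsto_id
  | succ k ih =>
    rw [Function.iterate_succ']
    exact Real.tendsto_log_atTop.comp ih

lemma log_add_le {x c : ℝ} (hx : 1 ≤ x) (hc : 0 ≤ c) : Real.log (x + c) ≤ Real.log x + c := by
  have hx0 : (0:ℝ) < x := by linarith
  have h1 : Real.log (x + c) - Real.log x = Real.log ((x+c)/x) := by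
    rw [Real.log_div (by linarith) (by linarith)]
  have h2 : Real.log ((x+c)/x) ≤ (x+c)/x - 1 := Real.log_le_sub_one_of_pos (by positivity)
  have h3 : (x+c)/x - 1 = c/x := by field_simp; ring
  have h4 : c/x ≤ c := by
    rw [div_le_iff₀ hx0]; nlinarith
  linarith [h1 ▸ h2, h3 ▸ h2]

lemma itlog_add_le : ∀ (k : ℕ) {x c : ℝ}, tw k ≤ x → 0 ≤ c →
    Real.log^[k] (x + c) ≤ Real.log^[k] x + c
  | 0, x, c, _, _ => le_refl _
  | (k+1), x, c, hx, hc => by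
    rw [Function.iterate_succ_apply, Function.iterate_succ_apply]
    have hx1 : (1:ℝ) ≤ x := le_trans (tw_ge_one (k+1)) hx
    calc Real.log^[k] (Real.log (x+c)) ≤ Real.log^[k] (Real.log x + c) := by
          refine itlog_mono k ?_ (log_add_le hx1 hc)
          exact le_trans (le_log_of_tw hx) (Real.log_le_log (by linarith) (by linarith))
      _ ≤ Real.log^[k] (Real.log x) + c := itlog_add_le k (le_log_of_tw hx) hc

end Stage1

namespace VVDS
variable {E : Type*} [NormedAddCommGroup E] [NormedSpace ℂ E] [CompleteSpace E] (f : VVDS E)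




lemma norm_term (s : ℂ) (n : ℕ) :
    ‖Complex.exp (s * (f.lam n : ℂ)) • f.a n‖ = Real.exp (s.re * f.lam n) * ‖f.a n‖ := by
  rw [norm_smul, Complex.norm_exp]
  congr 2
  simp [Complex.mul_re]

lemma summable_norm_term (s : ℂ) :
    Summable (fun n => ‖Complex.exp (s * (f.lam n : ℂ)) • f.a n‖) := by
  simpa only [norm_term] using f.abs_conv s

lemma summable_term (s : ℂ) :
    Summable (fun n => Complex.exp (s * (f.lam n : ℂ)) • f.a n) :=
  (f.summable_norm_term s).of_norm

lemma norm_toFun_le (s : ℂ) :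
    ‖f.toFun s‖ ≤ ∑' n, Real.exp (s.re * f.lam n) * ‖f.a n‖ := by
  have := norm_tsum_le_tsum_norm (f.summable_norm_term s)
  simpa only [norm_term, VVDS.toFun] using this

/-- the dominating series -/
def S (σ : ℝ) : ℝ := ∑' n, Real.exp (σ * f.lam n) * ‖f.a n‖

lemma summable_S (σ : ℝ) : Summable (fun n => Real.exp (σ * f.lam n) * ‖f.a n‖) := by
  have := f.abs_conv (σ : ℂ)
  simpa using this

lemma bddAbove_range (σ : ℝ) :
    BddAbove (Set.range fun t : ℝ => ‖f.toFun ((σ : ℂ) + (t : ℂ) * Complex.I)‖) := by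
  refine ⟨f.S σ, ?_⟩
  rintro x ⟨t, rfl⟩
  have := f.norm_toFun_le ((σ : ℂ) + (t : ℂ) * Complex.I)
  simpa [S] using this

lemma norm_le_M (σ t : ℝ) : ‖f.toFun ((σ : ℂ) + (t : ℂ) * Complex.I)‖ ≤ f.M σ :=
  le_ciSup (f.bddAbove_range σ) t

lemma M_nonneg (σ : ℝ) : 0 ≤ f.M σ := le_trans (norm_nonneg _) (f.norm_le_M σ 0)

lemma M_le_S (σ : ℝ) : f.M σ ≤ f.S σ := by
  refine ciSup_le fun t => ?_
  have := f.norm_toFun_le ((σ : ℂ) + (t : ℂ) * Complex.I)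
  simpa [S] using this

lemma S_mono {σ τ : ℝ} (hst : σ ≤ τ) : f.S σ ≤ f.S τ := by
  refine Summable.tsum_le_tsum (fun n => ?_) (f.summable_S σ) (f.summable_S τ)
  have hl := (f.lam_pos n).le
  exact mul_le_mul_of_nonneg_right
    (Real.exp_le_exp.mpr (mul_le_mul_of_nonneg_right hst hl)) (norm_nonneg _)

lemma S_le_exp_mul {σ τ : ℝ} (hst : σ ≤ τ) : f.S σ ≤ Real.exp ((σ - τ) * f.lam 0) * f.S τ := by
  rw [show f.S τ = ∑' n, Real.exp (τ * f.lam n) * ‖f.a n‖ from rfl, ← tsum_mul_left]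
  refine Summable.tsum_le_tsum (fun n => ?_) (f.summable_S σ) ((f.summable_S τ).mul_left _)
  rw [← mul_assoc, ← Real.exp_add]
  have h1 : σ * f.lam n ≤ (σ - τ) * f.lam 0 + τ * f.lam n := by
    have hl : f.lam 0 ≤ f.lam n := (f.lam_strictMono.monotone (Nat.zero_le n))
    nlinarith [f.lam_pos 0]
  have := Real.exp_le_exp.mpr h1
  exact mul_le_mul_of_nonneg_right this (by positivity)

/-- M is small far to the left -/
lemma exists_M_lt {y : ℝ} (hy : 0 < y) : ∃ σ₁ : ℝ, ∀ σ ≤ σ₁, f.M σ < y := by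
  obtain ⟨σ₁, hσ₁⟩ : ∃ σ₁ : ℝ, σ₁ ≤ 0 ∧ Real.exp (σ₁ * f.lam 0) * (f.S 0 + 1) < y := by
    have h1 : Tendsto (fun σ : ℝ => Real.exp (σ * f.lam 0) * (f.S 0 + 1)) atBot (𝓝 0) := by
      have : Tendsto (fun σ : ℝ => σ * f.lam 0) atBot atBot :=
        tendsto_id.atBot_mul_const (f.lam_pos 0)
      simpa using (Real.tendsto_exp_atBot.comp this).mul_const (f.S 0 + 1)
    have := (h1.eventually (eventually_lt_nhds hy)).and (eventually_le_atBot (0:ℝ))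
    obtain ⟨σ₁, h₁, h₂⟩ := this.exists
    exact ⟨σ₁, h₂, h₁⟩
  refine ⟨σ₁, fun σ hσ => ?_⟩
  have hS0 : (0:ℝ) ≤ f.S 0 := le_trans (f.M_nonneg 0) (f.M_le_S 0)
  calc f.M σ ≤ f.S σ := f.M_le_S σ
    _ ≤ Real.exp ((σ - 0) * f.lam 0) * f.S 0 := f.S_le_exp_mul (le_trans hσ hσ₁.1)
    _ ≤ Real.exp (σ₁ * f.lam 0) * (f.S 0 + 1) := by
        have : Real.exp ((σ - 0)*f.lam 0) ≤ Real.exp (σ₁ * f.lam 0) := by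
          apply Real.exp_le_exp.mpr
          have := (f.lam_pos 0)
          nlinarith
        nlinarith [Real.exp_pos (σ₁ * f.lam 0), Real.exp_pos ((σ - 0) * f.lam 0)]
    _ < y := hσ₁.2

lemma bddBelow_setOf {y : ℝ} (hy : 0 < y) : BddBelow {σ : ℝ | y ≤ f.M σ} := by
  obtain ⟨σ₁, hσ₁⟩ := f.exists_M_lt hy
  refine ⟨σ₁, fun σ hσ => ?_⟩
  by_contra hc
  push_neg at hc
  exact absurd hσ (not_le.mpr (hσ₁ σ hc.le))

lemma Minv_le_of_mem {y σ : ℝ} (hy : 0 < y) (hσ : y ≤ f.M σ) : f.Minv y ≤ σ :=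
  csInf_le (f.bddBelow_setOf hy) hσ

lemma M_lt_of_lt_Minv {y σ : ℝ} (hy : 0 < y) (hσ : σ < f.Minv y) : f.M σ < y := by
  by_contra hc
  push_neg at hc
  exact absurd (f.Minv_le_of_mem hy hc) (not_le.mpr hσ)

lemma Minv_mono {y₁ y₂ : ℝ} (h1 : 0 < y₁) (h12 : y₁ ≤ y₂)
    (hne : {σ : ℝ | y₂ ≤ f.M σ}.Nonempty) : f.Minv y₁ ≤ f.Minv y₂ :=
  csInf_le_csInf (f.bddBelow_setOf h1) hne (fun σ hσ => le_trans h12 hσ)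

lemma exists_near_Minv {y δ : ℝ} (hy : 0 < y) (hδ : 0 < δ)
    (hne : {σ : ℝ | y ≤ f.M σ}.Nonempty) :
    ∃ σ', y ≤ f.M σ' ∧ f.Minv y ≤ σ' ∧ σ' < f.Minv y + δ := by
  obtain ⟨σ', hmem, hlt⟩ := exists_lt_of_csInf_lt hne (lt_add_of_pos_right _ hδ)
  exact ⟨σ', hmem, csInf_le (f.bddBelow_setOf hy) hmem, hlt⟩


lemma exists_ne : ∃ n, f.a n ≠ 0 := by
  obtain ⟨n, hn⟩ := (Filter.tendsto_atBot.mp f.coeff_decay (-1)).exists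
  refine ⟨n, fun hc => ?_⟩
  rw [hc] at hn
  simp at hn
  linarith

lemma continuous_vert (σ : ℝ) :
    Continuous fun t : ℝ => f.toFun ((σ : ℂ) + (t : ℂ) * Complex.I) := by
  apply continuous_tsum (u := fun n => Real.exp (σ * f.lam n) * ‖f.a n‖)
  · intro n
    apply Continuous.smul _ continuous_const
    exact Complex.continuous_exp.comp (by continuity)
  · exact f.summable_S σ
  · intro n t
    rw [norm_term]
    simp

set_option maxHeartbeats 1000000 in
lemma coeff_le_M (σ : ℝ) (n₀ : ℕ) : ‖f.a n₀‖ * Real.exp (σ * f.lam n₀) ≤ f.M σ := by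
  refine le_of_forall_pos_le_add fun ε hε => ?_
  set u : ℕ → ℝ := fun n => Real.exp (σ * f.lam n) * ‖f.a n‖ with hu_def
  have hu : Summable u := f.summable_S σ
  -- choose N with small tail
  obtain ⟨N, hNtail, hNn₀⟩ : ∃ N : ℕ, (∑' k, u (k + N)) < ε/3 ∧ n₀ < N := by
    have h0 := tendsto_sum_nat_add u
    have h1 := h0.eventually (eventually_lt_nhds (show (0:ℝ) < ε/3 by linarith))
    exact (h1.and (eventually_gt_atTop n₀)).exists
  -- basic objects
  set term : ℕ → ℝ → E := fun n t =>
    Complex.exp (((σ : ℂ) + (t : ℂ) * Complex.I) * (f.lam n : ℂ)) • f.a n with hterm_def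
  set Ffun : ℝ → E := fun t => f.toFun ((σ : ℂ) + (t : ℂ) * Complex.I) with hF_def
  have hsum : ∀ t : ℝ, Summable (fun n => term n t) := fun t => f.summable_term _
  have hnorm_term : ∀ n t, ‖term n t‖ = u n := by
    intro n t
    have := f.norm_term ((σ : ℂ) + (t : ℂ) * Complex.I) n
    simpa using this
  set R : ℝ → E := fun t => ∑' k, term (k + N) t with hR_def
  have hsplit : ∀ t, Ffun t = (∑ n ∈ Finset.range N, term n t) + R t := by
    intro t
    exact (Summable.sum_add_tsum_nat_add N (hsum t)).symm
  have hRnorm : ∀ t, ‖R t‖ ≤ ε/3 := by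
    intro t
    have h1 : Summable fun k => ‖term (k + N) t‖ := by
      simp only [hnorm_term]
      exact (summable_nat_add_iff N).mpr hu
    refine le_trans (norm_tsum_le_tsum_norm h1) ?_
    have : ∑' k, ‖term (k + N) t‖ = ∑' k, u (k + N) := by
      congr 1; funext k; exact hnorm_term _ _
    rw [this]; exact hNtail.le
  -- modulating exponential
  set e : ℝ → ℂ := fun t => Complex.exp (-(f.lam n₀ : ℂ) * Complex.I * (t : ℂ)) with he_def
  have he_norm : ∀ t : ℝ, ‖e t‖ = 1 := by
    intro t
    rw [Complex.norm_exp]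
    simp [Complex.mul_re]
  set μ : ℕ → ℝ := fun n => f.lam n - f.lam n₀ with hμ_def
  set c : ℕ → ℂ := fun n => Complex.exp ((σ : ℂ) * (f.lam n : ℂ)) with hc_def
  have hkey : ∀ n t, e t • term n t
      = (c n * Complex.exp ((μ n : ℂ) * Complex.I * (t : ℂ))) • f.a n := by
    intro n t
    rw [hterm_def, he_def, hc_def, smul_smul]
    congr 1
    rw [← Complex.exp_add, ← Complex.exp_add]
    congr 1
    push_cast [hμ_def]
    ring
  -- continuity
  have hecont : Continuous e := Complex.continuous_exp.comp (by continuity)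
  have htermcont : ∀ n, Continuous (term n) := by
    intro n
    apply Continuous.smul _ continuous_const
    exact Complex.continuous_exp.comp (by continuity)
  have hFcont : Continuous Ffun := f.continuous_vert σ
  have hRcont : Continuous R := by
    have : R = fun t => Ffun t - ∑ n ∈ Finset.range N, term n t := by
      funext t; rw [hsplit t]; abel
    rw [this]
    exact hFcont.sub (continuous_finset_sum _ fun n _ => htermcont n)
  -- the integral of the remainder term
  have habs2T : ∀ T : ℝ, 1 ≤ T → |T - (-T)| = 2*T := by
    intro T hT; rw [abs_of_nonneg (by linarith)]; ring
  have hInt_e_R : ∀ T : ℝ, ‖∫ t in (-T)..T, e t • R t‖ ≤ ε/3 * |T - (-T)| := by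
    intro T
    refine intervalIntegral.norm_integral_le_of_norm_le_const fun t _ => ?_
    rw [norm_smul, he_norm, one_mul]
    exact hRnorm t
  set gn : ℕ → ℝ → E := fun n t =>
    (c n * Complex.exp ((μ n : ℂ) * Complex.I * (t : ℂ))) • f.a n with hgn_def
  have hgncont : ∀ n, Continuous (gn n) := by
    intro n
    apply Continuous.smul _ continuous_const
    exact continuous_const.mul (Complex.continuous_exp.comp (by continuity))
  have hJ_split : ∀ T : ℝ, (∫ t in (-T)..T, e t • Ffun t)
      = (∑ n ∈ Finset.range N, ∫ t in (-T)..T, gn n t) + ∫ t in (-T)..T, e t • R t := by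
    intro T
    rw [← intervalIntegral.integral_finset_sum
        (fun n _ => ((hgncont n).intervalIntegrable _ _)),
      ← intervalIntegral.integral_add (g := fun t => e t • R t)
        ((continuous_finset_sum _ fun n _ => hgncont n).intervalIntegrable _ _)
        ((hecont.smul hRcont).intervalIntegrable _ _)]
    congr 1
    funext t
    rw [hsplit t, smul_add, Finset.smul_sum]
    congr 1
    exact Finset.sum_congr rfl fun n _ => hkey n t
  have hint_n : ∀ (n : ℕ) (T : ℝ), (∫ t in (-T)..T, gn n t)
      = (c n * ∫ t in (-T)..T, Complex.exp ((μ n : ℂ) * Complex.I * (t : ℂ))) • f.a n := by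
    intro n T
    rw [hgn_def]
    rw [intervalIntegral.integral_smul_const, intervalIntegral.integral_const_mul]
  have hμ0 : μ n₀ = 0 := by simp [hμ_def]
  have hint_n0 : ∀ T : ℝ, (∫ t in (-T)..T, gn n₀ t) = ((2*T : ℂ) * c n₀) • f.a n₀ := by
    intro T
    rw [hint_n n₀ T]
    have h1 : (fun t : ℝ => Complex.exp ((μ n₀ : ℂ) * Complex.I * (t : ℂ)))
        = fun _ : ℝ => (1 : ℂ) := by
      funext t; rw [hμ0]; simp
    rw [h1, intervalIntegral.integral_const]
    congr 1
    rw [Complex.real_smul]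
    push_cast
    ring
  have hint_ne : ∀ n, n ≠ n₀ → ∀ T : ℝ, ‖∫ t in (-T)..T, gn n t‖ ≤ 2 / |μ n| * u n := by
    intro n hn T
    have hμne : μ n ≠ 0 := by
      rw [hμ_def]
      exact sub_ne_zero.mpr (fun hl => hn (f.lam_strictMono.injective hl))
    have hcne : ((μ n : ℂ) * Complex.I) ≠ 0 :=
      mul_ne_zero (by exact_mod_cast hμne) Complex.I_ne_zero
    rw [hint_n n T, norm_smul, norm_mul]
    have h2 : (∫ t in (-T)..T, Complex.exp (((μ n : ℂ) * Complex.I) * (t : ℂ)))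
        = (Complex.exp ((μ n : ℂ) * Complex.I * (T : ℂ))
           - Complex.exp ((μ n : ℂ) * Complex.I * ((-T : ℝ) : ℂ))) / ((μ n : ℂ) * Complex.I) :=
      integral_exp_mul_complex hcne
    have hexp1 : ∀ r : ℝ, ‖Complex.exp ((μ n : ℂ) * Complex.I * (r : ℂ))‖ = 1 := by
      intro r
      rw [Complex.norm_exp]
      simp [Complex.mul_re]
    have h3 : ‖(∫ t in (-T)..T, Complex.exp (((μ n : ℂ) * Complex.I) * (t : ℂ)))‖
        ≤ 2 / |μ n| := by
      rw [h2, norm_div]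
      have hnum : ‖Complex.exp ((μ n : ℂ) * Complex.I * (T : ℂ))
          - Complex.exp ((μ n : ℂ) * Complex.I * ((-T : ℝ) : ℂ))‖ ≤ 2 := by
        refine le_trans (norm_sub_le _ _) ?_
        rw [hexp1 T, hexp1 (-T)]
        norm_num
      have hden : ‖(μ n : ℂ) * Complex.I‖ = |μ n| := by
        rw [norm_mul, Complex.norm_I, mul_one, Complex.norm_real, Real.norm_eq_abs]
      rw [hden]
      have hμpos : 0 < |μ n| := abs_pos.mpr hμne
      gcongr
    have hcn : ‖c n‖ = Real.exp (σ * f.lam n) := by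
      rw [hc_def]
      simp only [← Complex.ofReal_mul]
      rw [Complex.norm_exp, Complex.ofReal_re]
    calc ‖c n‖ * ‖(∫ t in (-T)..T, Complex.exp (((μ n : ℂ) * Complex.I) * (t : ℂ)))‖ * ‖f.a n‖
        ≤ Real.exp (σ * f.lam n) * (2 / |μ n|) * ‖f.a n‖ := by
          rw [hcn]
          have h4 := norm_nonneg (f.a n)
          have h5 := Real.exp_pos (σ * f.lam n)
          exact mul_le_mul_of_nonneg_right (mul_le_mul_of_nonneg_left h3 h5.le) h4
      _ = 2 / |μ n| * u n := by rw [hu_def]; ring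
  -- choose T
  set B : ℝ := ∑ n ∈ (Finset.range N).erase n₀, 2 / |μ n| * u n with hB_def
  have hun : ∀ n, 0 ≤ u n := fun n => by
    rw [hu_def]; positivity
  have hB0 : 0 ≤ B := Finset.sum_nonneg fun n _ => by positivity
  set T : ℝ := max 1 (3*(B+1)/ε) with hT_def
  have hT1 : (1:ℝ) ≤ T := le_max_left _ _
  have hT0 : (0:ℝ) < T := lt_of_lt_of_le one_pos hT1
  have h2T : (0:ℝ) < 2*T := by linarith
  have h2Tc : ((2*T : ℝ) : ℂ) ≠ 0 := by exact_mod_cast h2T.ne'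
  set J : E := ∫ t in (-T)..T, e t • Ffun t with hJ_def
  have hJnorm : ‖J‖ ≤ f.M σ * (2*T) := by
    have h1 : ‖J‖ ≤ f.M σ * |T - (-T)| := by
      refine intervalIntegral.norm_integral_le_of_norm_le_const fun t _ => ?_
      rw [norm_smul, he_norm, one_mul]
      exact f.norm_le_M σ t
    rwa [habs2T T hT1] at h1
  -- split off the n₀ term
  have hsum_split : (∑ n ∈ Finset.range N, ∫ t in (-T)..T, gn n t)
      = ((2*T : ℂ) * c n₀) • f.a n₀ + ∑ n ∈ (Finset.range N).erase n₀, ∫ t in (-T)..T, gn n t := by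
    rw [← Finset.add_sum_erase _ _ (Finset.mem_range.mpr hNn₀), hint_n0 T]
  set Srest : E := ∑ n ∈ (Finset.range N).erase n₀, ∫ t in (-T)..T, gn n t with hSrest_def
  set IR : E := ∫ t in (-T)..T, e t • R t with hIR_def
  have hJeq : J = ((2*T : ℂ) * c n₀) • f.a n₀ + (Srest + IR) := by
    rw [hJ_def, hJ_split T, hsum_split]
    abel
  have hSrest_norm : ‖Srest‖ ≤ B := by
    refine le_trans (norm_sum_le _ _) (Finset.sum_le_sum fun n hn => ?_)
    exact hint_ne n (Finset.ne_of_mem_erase hn) T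
  have hIR_norm : ‖IR‖ ≤ ε/3 * (2*T) := by
    have := hInt_e_R T
    rwa [habs2T T hT1] at this
  -- the averaged vector
  have hkey2 : (((2*T : ℝ) : ℂ))⁻¹ • J = c n₀ • f.a n₀ + (((2*T : ℝ):ℂ))⁻¹ • (Srest + IR) := by
    rw [hJeq, smul_add, smul_smul]
    congr 2
    have hT0' : (T:ℂ) ≠ 0 := by exact_mod_cast hT0.ne'
    push_cast
    field_simp
  have hnorm_avg : ‖(((2*T : ℝ):ℂ))⁻¹ • J‖ ≤ f.M σ := by
    rw [norm_smul, norm_inv, Complex.norm_real, Real.norm_eq_abs, abs_of_pos h2T]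
    rw [inv_mul_le_iff₀ h2T]
    linarith [hJnorm]
  have hrest_norm : ‖(((2*T : ℝ):ℂ))⁻¹ • (Srest + IR)‖ ≤ ε/3 + ε/3 := by
    rw [norm_smul, norm_inv, Complex.norm_real, Real.norm_eq_abs, abs_of_pos h2T]
    have h1 : ‖Srest + IR‖ ≤ B + ε/3*(2*T) := le_trans (norm_add_le _ _) (by linarith)
    have h2 : (2*T)⁻¹ * (B + ε/3*(2*T)) ≤ ε/3 + ε/3 := by
      rw [inv_mul_le_iff₀ h2T]
      have h3 : 3*(B+1)/ε ≤ T := le_max_right _ _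
      have h4 : 3*(B+1) ≤ ε * T := by
        rw [div_le_iff₀ hε] at h3
        linarith
      nlinarith
    calc (2*T)⁻¹ * ‖Srest + IR‖ ≤ (2*T)⁻¹ * (B + ε/3*(2*T)) := by
          exact mul_le_mul_of_nonneg_left h1 (by positivity)
      _ ≤ ε/3 + ε/3 := h2
  have hfinal : ‖c n₀ • f.a n₀‖ ≤ f.M σ + (ε/3 + ε/3) := by
    calc ‖c n₀ • f.a n₀‖ = ‖(((2*T : ℝ):ℂ))⁻¹ • J - (((2*T : ℝ):ℂ))⁻¹ • (Srest + IR)‖ := by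
          rw [hkey2]; congr 1; abel
      _ ≤ ‖(((2*T : ℝ):ℂ))⁻¹ • J‖ + ‖(((2*T : ℝ):ℂ))⁻¹ • (Srest + IR)‖ := norm_sub_le _ _
      _ ≤ f.M σ + (ε/3 + ε/3) := add_le_add hnorm_avg hrest_norm
  have hc0 : ‖c n₀ • f.a n₀‖ = Real.exp (σ * f.lam n₀) * ‖f.a n₀‖ := by
    rw [norm_smul, hc_def]
    simp only [← Complex.ofReal_mul]
    rw [Complex.norm_exp, Complex.ofReal_re]
  rw [hc0] at hfinal
  linarith


lemma M_tendsto : Tendsto f.M atTop atTop := by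
  obtain ⟨n₀, hn₀⟩ := f.exists_ne
  have hpos : 0 < ‖f.a n₀‖ := norm_pos_iff.mpr hn₀
  have h1 : Tendsto (fun σ : ℝ => ‖f.a n₀‖ * Real.exp (σ * f.lam n₀)) atTop atTop := by
    apply Tendsto.const_mul_atTop hpos
    exact Real.tendsto_exp_atTop.comp (tendsto_id.atTop_mul_const (f.lam_pos n₀))
  exact tendsto_atTop_mono (fun σ => f.coeff_le_M σ n₀) h1

lemma setOf_nonempty (y : ℝ) : {σ : ℝ | y ≤ f.M σ}.Nonempty := by
  obtain ⟨σ, hσ⟩ := (f.M_tendsto.eventually_ge_atTop y).exists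
  exact ⟨σ, hσ⟩

lemma Minv_tendsto : Tendsto f.Minv atTop atTop := by
  rw [tendsto_atTop_atTop]
  intro b
  refine ⟨f.S b + 1, fun y hy => ?_⟩
  refine le_csInf (f.setOf_nonempty y) fun σ hσ => ?_
  by_contra hc
  push_neg at hc
  have h1 : f.M σ ≤ f.S b := le_trans (f.M_le_S σ) (f.S_mono hc.le)
  have h2 : y ≤ f.M σ := hσ
  linarith


end VVDS
section Plumbing
open Filter Topology

lemma EReal.le_coe_of_forall_gt {x : EReal} {r : ℝ} (h : ∀ w : ℝ, r < w → x ≤ (w : EReal)) :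
    x ≤ (r : EReal) := by
  by_contra hc
  push_neg at hc
  obtain ⟨a, ha1, ha2⟩ := EReal.lt_iff_exists_real_btwn.mp hc
  exact absurd (h a (EReal.coe_lt_coe_iff.mp ha1)) (not_le.mpr ha2)

lemma EReal.coe_le_of_forall_lt {x : EReal} {r : ℝ} (h : ∀ w : ℝ, w < r → (w : EReal) ≤ x) :
    (r : EReal) ≤ x := by
  by_contra hc
  push_neg at hc
  obtain ⟨a, ha1, ha2⟩ := EReal.lt_iff_exists_real_btwn.mp hc
  exact absurd (h a (EReal.coe_lt_coe_iff.mp ha2)) (not_le.mpr ha1)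

lemma EReal.toRealPos {x : EReal} (h0 : 0 < x) (ht : x < ⊤) : 0 < x.toReal := by
  have h1 : ((0:ℝ) : EReal) < ((x.toReal : ℝ) : EReal) := by
    rwa [EReal.coe_toReal ht.ne (by intro hh; rw [hh] at h0; exact absurd h0 (by simp)),
      EReal.coe_zero]
  exact_mod_cast h1

lemma ev_gt_of_lt_liminf {v : ℝ → ℝ} {c : ℝ}
    (h : (c : EReal) < liminf (fun σ : ℝ => ((v σ : ℝ) : EReal)) atTop) :
    ∀ᶠ σ : ℝ in atTop, c < v σ := by
  have h2 := eventually_lt_of_lt_liminf h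
  exact h2.mono fun σ hσ => EReal.coe_lt_coe_iff.mp hσ

lemma ev_lt_of_limsup_lt {v : ℝ → ℝ} {c : ℝ}
    (h : limsup (fun σ : ℝ => ((v σ : ℝ) : EReal)) atTop < (c : EReal)) :
    ∀ᶠ σ : ℝ in atTop, v σ < c := by
  have h2 := eventually_lt_of_limsup_lt h
  exact h2.mono fun σ hσ => EReal.coe_lt_coe_iff.mp hσ

lemma freq_gt_of_lt_limsup {v : ℝ → ℝ} {c : ℝ}
    (h : (c : EReal) < limsup (fun σ : ℝ => ((v σ : ℝ) : EReal)) atTop) :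
    ∃ᶠ σ : ℝ in atTop, c < v σ := by
  have h2 := frequently_lt_of_lt_limsup (by isBoundedDefault) h
  exact h2.mono fun σ hσ => EReal.coe_lt_coe_iff.mp hσ

lemma le_liminf_of_ev_le {v : ℝ → ℝ} {c : ℝ} (h : ∀ᶠ σ : ℝ in atTop, c ≤ v σ) :
    (c : EReal) ≤ liminf (fun σ : ℝ => ((v σ : ℝ) : EReal)) atTop :=
  le_liminf_of_le (by isBoundedDefault) (h.mono fun σ hσ => EReal.coe_le_coe_iff.mpr hσ)

lemma liminf_le_of_freq_le {v : ℝ → ℝ} {c : ℝ} (h : ∃ᶠ σ : ℝ in atTop, v σ ≤ c) :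
    liminf (fun σ : ℝ => ((v σ : ℝ) : EReal)) atTop ≤ (c : EReal) :=
  liminf_le_of_frequently_le (h.mono fun σ hσ => EReal.coe_le_coe_iff.mpr hσ)

end Plumbing

open Stage1 in
set_option maxHeartbeats 2000000 in
theorem stmt_13 (f : VVDS E) (g : VVDS F) (h : VVDS G) (p q m : ℕ)
    (hf1 : (0 : EReal) < relRittLowerOrder m q f h)
    (hf2 : relRittLowerOrder m q f h ≤ relRittOrder m q f h)
    (hf3 : relRittOrder m q f h < ⊤)
    (hg1 : (0 : EReal) < relRittLowerOrder m p g h)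
    (hg2 : relRittLowerOrder m p g h ≤ relRittOrder m p g h)
    (hg3 : relRittOrder m p g h < ⊤)
    (hDbf1 : (0 : EReal) < relRittLowerType m q f h)
    (hDbf2 : relRittLowerType m q f h < ⊤)
    (hDg1 : (0 : EReal) < relRittType m p g h)
    (hDg2 : relRittType m p g h < ⊤)
    (htbg1 : (0 : EReal) < relRittUpperWeakType m p g h)
    (htbg2 : relRittUpperWeakType m p g h < ⊤)
    :
    ((max (((relRittLowerType m q f h).toReal / (relRittType m p g h).toReal) ^ (1 / (relRittOrder m p g h).toReal)) (((relRittLowerType m q f h).toReal / (relRittUpperWeakType m p g h).toReal) ^ (1 / (relRittLowerOrder m p g h).toReal)) : ℝ) : EReal) ≤ relRittWeakType p q f g := by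
  have hbne : ∀ x : EReal, 0 < x → x ≠ ⊥ := fun x hx hh => by
    rw [hh] at hx; exact absurd hx (by simp)
  -- positive order of f
  have hf0 : (0:EReal) < relRittOrder m q f h := lt_of_lt_of_le hf1 hf2
  have hg0 : (0:EReal) < relRittOrder m p g h := lt_of_lt_of_le hg1 hg2
  have hgl3 : relRittLowerOrder m p g h < ⊤ := lt_of_le_of_lt hg2 hg3
  set A : ℝ := (relRittLowerType m q f h).toReal with hA_def
  set B : ℝ := (relRittType m p g h).toReal with hB_def
  set C : ℝ := (relRittUpperWeakType m p g h).toReal with hC_def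
  set rf : ℝ := (relRittOrder m q f h).toReal with hrf_def
  set rg : ℝ := (relRittOrder m p g h).toReal with hrg_def
  set lg : ℝ := (relRittLowerOrder m p g h).toReal with hlg_def
  set lam : ℝ := (relRittLowerOrder p q f g).toReal with hlam_def
  have hA : 0 < A := EReal.toRealPos hDbf1 hDbf2
  have hB : 0 < B := EReal.toRealPos hDg1 hDg2
  have hC : 0 < C := EReal.toRealPos htbg1 htbg2
  have hrf : 0 < rf := EReal.toRealPos hf0 hf3
  have hrg : 0 < rg := EReal.toRealPos hg0 hg3
  have hlg : 0 < lg := EReal.toRealPos hg1 hgl3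
  have hlgrg : lg ≤ rg := EReal.toReal_le_toReal hg2 (hbne _ hg1) hg3.ne
  have hcoeA : ((A : ℝ) : EReal) = relRittLowerType m q f h :=
    EReal.coe_toReal hDbf2.ne (hbne _ hDbf1)
  have hcoeB : ((B : ℝ) : EReal) = relRittType m p g h :=
    EReal.coe_toReal hDg2.ne (hbne _ hDg1)
  have hcoeC : ((C : ℝ) : EReal) = relRittUpperWeakType m p g h :=
    EReal.coe_toReal htbg2.ne (hbne _ htbg1)
  have hcoerf : ((rf : ℝ) : EReal) = relRittOrder m q f h :=
    EReal.coe_toReal hf3.ne (hbne _ hf0)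
  have hcoerg : ((rg : ℝ) : EReal) = relRittOrder m p g h :=
    EReal.coe_toReal hg3.ne (hbne _ hg0)
  -- tendsto facts
  have hMf : Filter.Tendsto f.M Filter.atTop Filter.atTop := f.M_tendsto
  have hMg : Filter.Tendsto g.M Filter.atTop Filter.atTop := g.M_tendsto
  have hGMf : Filter.Tendsto (fun σ => g.Minv (f.M σ)) Filter.atTop Filter.atTop :=
    g.Minv_tendsto.comp hMf
  have hHMf : Filter.Tendsto (fun σ => h.Minv (f.M σ)) Filter.atTop Filter.atTop :=
    h.Minv_tendsto.comp hMf
  have hHMg : Filter.Tendsto (fun σ => h.Minv (g.M σ)) Filter.atTop Filter.atTop :=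
    h.Minv_tendsto.comp hMg
  have hFMg : Filter.Tendsto (fun σ => f.Minv (g.M σ)) Filter.atTop Filter.atTop :=
    f.Minv_tendsto.comp hMg
  -- eventual positivity of iterated logs
  have hq1ev : ∀ᶠ σ : ℝ in Filter.atTop, 1 ≤ Real.log^[q-1] σ :=
    (itlog_tendsto (q-1)).eventually_ge_atTop 1
  have hp1ev : ∀ᶠ σ : ℝ in Filter.atTop, 1 ≤ Real.log^[p-1] σ :=
    (itlog_tendsto (p-1)).eventually_ge_atTop 1
  have hq0ev : ∀ᶠ σ : ℝ in Filter.atTop, 1 ≤ Real.log^[q] σ :=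
    (itlog_tendsto q).eventually_ge_atTop 1
  have hp0ev : ∀ᶠ σ : ℝ in Filter.atTop, 1 ≤ Real.log^[p] σ :=
    (itlog_tendsto p).eventually_ge_atTop 1
  -- (E1)
  have hE1 : ∀ ε : ℝ, 0 < ε → ∀ᶠ σ : ℝ in Filter.atTop,
      (A - ε) * (Real.log^[q-1] σ) ^ rf ≤ Real.log^[m-1] (h.Minv (f.M σ)) := by
    intro ε hε
    have h1 : ((A - ε : ℝ) : EReal) < relRittLowerType m q f h := by
      rw [← hcoeA]
      exact_mod_cast sub_lt_self A hε
    have h2 := ev_gt_of_lt_liminf (v := fun σ : ℝ =>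
      Real.log^[m-1] (h.Minv (f.M σ)) / (Real.log^[q-1] σ) ^ (relRittOrder m q f h).toReal)
      (by exact h1)
    filter_upwards [h2, hq1ev] with σ h3 h4
    have hden : (0:ℝ) < (Real.log^[q-1] σ) ^ (relRittOrder m q f h).toReal :=
      Real.rpow_pos_of_pos (by linarith) _
    have h5 := (lt_div_iff₀ hden).mp h3
    rw [← hrf_def] at h5
    linarith
  -- (E2) for D ∈ {B, C} with exponents rg, lg
  have hE2 : ∀ ε : ℝ, 0 < ε → ∀ᶠ σ : ℝ in Filter.atTop,
      Real.log^[m-1] (h.Minv (g.M σ)) ≤ (B + ε) * (Real.log^[p-1] σ) ^ rg := by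
    intro ε hε
    have h1 : relRittType m p g h < ((B + ε : ℝ) : EReal) := by
      rw [← hcoeB]
      exact_mod_cast lt_add_of_pos_right B hε
    have h2 := ev_lt_of_limsup_lt (v := fun σ : ℝ =>
      Real.log^[m-1] (h.Minv (g.M σ)) / (Real.log^[p-1] σ) ^ (relRittOrder m p g h).toReal)
      (by exact h1)
    filter_upwards [h2, hp1ev] with σ h3 h4
    have hden : (0:ℝ) < (Real.log^[p-1] σ) ^ (relRittOrder m p g h).toReal :=
      Real.rpow_pos_of_pos (by linarith) _
    have h5 := (div_lt_iff₀ hden).mp h3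
    rw [← hrg_def] at h5
    linarith
  have hE3 : ∀ ε : ℝ, 0 < ε → ∀ᶠ σ : ℝ in Filter.atTop,
      Real.log^[m-1] (h.Minv (g.M σ)) ≤ (C + ε) * (Real.log^[p-1] σ) ^ lg := by
    intro ε hε
    have h1 : relRittUpperWeakType m p g h < ((C + ε : ℝ) : EReal) := by
      rw [← hcoeC]
      exact_mod_cast lt_add_of_pos_right C hε
    have h2 := ev_lt_of_limsup_lt (v := fun σ : ℝ =>
      Real.log^[m-1] (h.Minv (g.M σ)) / (Real.log^[p-1] σ) ^ (relRittLowerOrder m p g h).toReal)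
      (by exact h1)
    filter_upwards [h2, hp1ev] with σ h3 h4
    have hden : (0:ℝ) < (Real.log^[p-1] σ) ^ (relRittLowerOrder m p g h).toReal :=
      Real.rpow_pos_of_pos (by linarith) _
    have h5 := (div_lt_iff₀ hden).mp h3
    rw [← hlg_def] at h5
    linarith
  -- (E4)
  have hE4 : ∀ ε : ℝ, 0 < ε → ∀ᶠ σ : ℝ in Filter.atTop,
      Real.log^[m] (h.Minv (f.M σ)) ≤ (rf + ε) * Real.log^[q] σ := by
    intro ε hε
    have h1 : relRittOrder m q f h < ((rf + ε : ℝ) : EReal) := by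
      rw [← hcoerf]
      exact_mod_cast lt_add_of_pos_right rf hε
    have h2 := ev_lt_of_limsup_lt (v := fun σ : ℝ =>
      Real.log^[m] (h.Minv (f.M σ)) / Real.log^[q] σ) (by exact h1)
    filter_upwards [h2, hq0ev] with σ h3 h4
    have h5 := (div_lt_iff₀ (by linarith : (0:ℝ) < Real.log^[q] σ)).mp h3
    linarith
  -- (E5)
  have hE5 : ∀ ε : ℝ, 0 < ε → ∃ᶠ σ : ℝ in Filter.atTop,
      (rg - ε) * Real.log^[p] σ ≤ Real.log^[m] (h.Minv (g.M σ)) := by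
    intro ε hε
    have h1 : ((rg - ε : ℝ) : EReal) < relRittOrder m p g h := by
      rw [← hcoerg]
      exact_mod_cast sub_lt_self rg hε
    have h2 := freq_gt_of_lt_limsup (v := fun σ : ℝ =>
      Real.log^[m] (h.Minv (g.M σ)) / Real.log^[p] σ) (by exact h1)
    refine (h2.and_eventually hp0ev).mono ?_
    rintro σ ⟨h3, h4⟩
    have h5 := (lt_div_iff₀ (by linarith : (0:ℝ) < Real.log^[p] σ)).mp h3
    linarith
  -- transfer lemma
  have KEY : ∀ D ρ' : ℝ, 0 ≤ D → 0 ≤ ρ' →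
      (∀ᶠ σ' : ℝ in Filter.atTop,
        Real.log^[m-1] (h.Minv (g.M σ')) ≤ D * (Real.log^[p-1] σ') ^ ρ') →
      ∀ᶠ σ : ℝ in Filter.atTop,
        Real.log^[m-1] (h.Minv (f.M σ)) ≤ D * (Real.log^[p-1] (g.Minv (f.M σ)) + 1) ^ ρ' := by
    intro D ρ' hD hρ' hev
    obtain ⟨T, hT⟩ := Filter.eventually_atTop.mp hev
    filter_upwards [hMf.eventually_ge_atTop 1,
      hGMf.eventually_ge_atTop (max T (tw ((p-1)+1))),
      hHMf.eventually_ge_atTop (tw (m-1))] with σ h1 h2 h3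
    have hy : (0:ℝ) < f.M σ := lt_of_lt_of_le one_pos h1
    obtain ⟨σ', hmem, hge, hlt⟩ := g.exists_near_Minv hy one_pos (g.setOf_nonempty (f.M σ))
    have hGT : T ≤ σ' := le_trans (le_trans (le_max_left _ _) h2) hge
    have htwp1 : tw ((p-1)+1) ≤ g.Minv (f.M σ) := le_trans (le_max_right _ _) h2
    have htwp1' : tw ((p-1)+1) ≤ σ' := le_trans htwp1 hge
    have htwp : tw (p-1) ≤ g.Minv (f.M σ) := le_trans (tw_le_succ _) htwp1
    calc Real.log^[m-1] (h.Minv (f.M σ))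
        ≤ Real.log^[m-1] (h.Minv (g.M σ')) :=
          itlog_mono (m-1) h3 (h.Minv_mono hy hmem (h.setOf_nonempty _))
      _ ≤ D * (Real.log^[p-1] σ') ^ ρ' := hT σ' hGT
      _ ≤ D * (Real.log^[p-1] (g.Minv (f.M σ)) + 1) ^ ρ' := by
          have hm1 : Real.log^[p-1] σ' ≤ Real.log^[p-1] (g.Minv (f.M σ) + 1) :=
            itlog_mono (p-1) (le_trans (tw_le_succ _) htwp1') hlt.le
          have hm2 : Real.log^[p-1] (g.Minv (f.M σ) + 1)
              ≤ Real.log^[p-1] (g.Minv (f.M σ)) + 1 := itlog_add_le (p-1) htwp zero_le_one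
          have hnn : 0 ≤ Real.log^[p-1] σ' :=
            le_trans (tw_pos 1).le (itlog_ge_tw (p-1) htwp1')
          exact mul_le_mul_of_nonneg_left
            (Real.rpow_le_rpow hnn (le_trans hm1 hm2) hρ') hD
  -- the lower order of f wrt g is nonnegative
  have hord0 : (0:EReal) ≤ relRittLowerOrder p q f g := by
    have h2 : ∀ᶠ σ : ℝ in Filter.atTop,
        (0:ℝ) ≤ Real.log^[p] (g.Minv (f.M σ)) / Real.log^[q] σ := by
      filter_upwards [((itlog_tendsto p).comp hGMf).eventually_ge_atTop 0, hq0ev] with σ h1 hq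
      exact div_nonneg h1 (by linarith)
    have h3 := le_liminf_of_ev_le h2
    rw [EReal.coe_zero] at h3
    exact h3
  -- the lower order of f wrt g is at most rf / rg
  have hLAM : relRittLowerOrder p q f g ≤ ((rf/rg : ℝ) : EReal) := by
    refine EReal.le_coe_of_forall_gt fun w hw => ?_
    obtain ⟨ε, hε0, hερ, hwε⟩ : ∃ ε : ℝ, 0 < ε ∧ ε < rg ∧ (rf+ε)/(rg-ε) + ε < w := by
      have c1 : ContinuousAt (fun e : ℝ => (rf+e)/(rg-e) + e) 0 :=
        (((continuousAt_const.add continuousAt_id).div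
          (continuousAt_const.sub continuousAt_id) (by simpa using hrg.ne')).add continuousAt_id)
      have c2 : (fun e : ℝ => (rf+e)/(rg-e) + e) 0 = rf/rg := by norm_num
      have h5 : ∀ᶠ e : ℝ in nhds 0, (rf+e)/(rg-e) + e < w := by
        refine (c1.tendsto.eventually (eventually_lt_nhds ?_))
        simpa using hw
      have h6 : ∀ᶠ e : ℝ in nhds 0, e < rg := eventually_lt_nhds hrg
      have h7 : ∀ᶠ e : ℝ in nhdsWithin 0 (Set.Ioi 0),
          ((rf+e)/(rg-e) + e < w ∧ e < rg) ∧ 0 < e :=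
        ((h5.and h6).filter_mono nhdsWithin_le_nhds).and self_mem_nhdsWithin
      obtain ⟨e, ⟨he1, he2⟩, he3⟩ := h7.exists
      exact ⟨e, he3, he2, he1⟩
    set r : ℝ := (rf+ε)/(rg-ε) with hr_def
    have hrge : (0:ℝ) < rg - ε := by linarith
    have hr0 : 0 ≤ r := div_nonneg (by linarith) hrge.le
    obtain ⟨T1, hT1⟩ := Filter.eventually_atTop.mp (hE4 ε hε0)
    have hσm_t : Filter.Tendsto (fun σ' : ℝ => f.Minv (g.M σ') - 1) Filter.atTop Filter.atTop := by
      simpa [sub_eq_add_neg] using Filter.tendsto_atTop_add_const_right Filter.atTop (-1 : ℝ) hFMg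
    have hfreq : ∃ᶠ σ : ℝ in Filter.atTop,
        Real.log^[p] (g.Minv (f.M σ)) / Real.log^[q] σ ≤ w := by
      rw [Filter.frequently_atTop]
      intro R
      have hbig : ∀ᶠ σ' : ℝ in Filter.atTop,
          (1 ≤ g.M σ') ∧ (max (R+1) T1 ≤ f.Minv (g.M σ')) ∧
          (tw p ≤ g.Minv (f.M (f.Minv (g.M σ') - 1))) ∧
          (1 ≤ f.M (f.Minv (g.M σ') - 1)) ∧
          (tw m ≤ h.Minv (g.M σ')) ∧
          (tw q ≤ f.Minv (g.M σ') - 1) ∧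
          (max 1 (2*r/ε) ≤ Real.log^[q] (f.Minv (g.M σ') - 1)) := by
        filter_upwards [hMg.eventually_ge_atTop 1,
          hFMg.eventually_ge_atTop (max (R+1) T1),
          (hGMf.comp hσm_t).eventually_ge_atTop (tw p),
          (hMf.comp hσm_t).eventually_ge_atTop 1,
          hHMg.eventually_ge_atTop (tw m),
          hσm_t.eventually_ge_atTop (tw q),
          ((itlog_tendsto q).comp hσm_t).eventually_ge_atTop (max 1 (2*r/ε))] with σ'
            b1 b2 b3 b4 b5 b6 b7
        exact ⟨b1, b2, b3, b4, b5, b6, b7⟩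
      obtain ⟨σ', hfr5, b1, b2, b3, b4, b5, b6, b7⟩ := ((hE5 ε hε0).and_eventually hbig).exists
      set u : ℝ := f.Minv (g.M σ') with hu_def
      set σm : ℝ := u - 1 with hσm_def
      have hgM0 : (0:ℝ) < g.M σ' := lt_of_lt_of_le one_pos b1
      obtain ⟨σp, hmemp, hgep, hltp⟩ :=
        f.exists_near_Minv hgM0 one_pos (f.setOf_nonempty (g.M σ'))
      have hσmR : R ≤ σm := by
        have := le_trans (le_max_left (R+1) T1) b2
        rw [hσm_def]; linarith
      refine ⟨σm, hσmR, ?_⟩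
      have hMfσm : f.M σm < g.M σ' := f.M_lt_of_lt_Minv hgM0 (by rw [hσm_def]; linarith)
      have hGle : g.Minv (f.M σm) ≤ σ' :=
        g.Minv_le_of_mem (lt_of_lt_of_le one_pos b4) hMfσm.le
      have hLp : Real.log^[p] (g.Minv (f.M σm)) ≤ Real.log^[p] σ' := itlog_mono p b3 hGle
      have hHmono : h.Minv (g.M σ') ≤ h.Minv (f.M σp) :=
        h.Minv_mono hgM0 hmemp (h.setOf_nonempty _)
      have hLm : Real.log^[m] (h.Minv (g.M σ')) ≤ Real.log^[m] (h.Minv (f.M σp)) :=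
        itlog_mono m b5 hHmono
      have hE4σp : Real.log^[m] (h.Minv (f.M σp)) ≤ (rf + ε) * Real.log^[q] σp := by
        refine hT1 σp ?_
        have := le_trans (le_max_right (R+1) T1) b2
        linarith
      have hLq : Real.log^[q] σp ≤ Real.log^[q] σm + 2 := by
        have h1 : σp ≤ σm + 2 := by rw [hσm_def]; linarith
        have h2 : tw q ≤ σp := le_trans b6 (by linarith)
        exact le_trans (itlog_mono q h2 h1) (itlog_add_le q b6 (by norm_num))
      have k1 : (rg - ε) * Real.log^[p] (g.Minv (f.M σm)) ≤ (rf + ε) * (Real.log^[q] σm + 2) := by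
        have t1 : (rg-ε) * Real.log^[p] (g.Minv (f.M σm)) ≤ (rg-ε) * Real.log^[p] σ' :=
          mul_le_mul_of_nonneg_left hLp hrge.le
        have t2 : (rg-ε) * Real.log^[p] σ' ≤ (rf+ε) * Real.log^[q] σp :=
          le_trans hfr5 (le_trans hLm hE4σp)
        have t3 : (rf+ε) * Real.log^[q] σp ≤ (rf+ε) * (Real.log^[q] σm + 2) :=
          mul_le_mul_of_nonneg_left hLq (by linarith)
        linarith
      have hL1 : (1:ℝ) ≤ Real.log^[q] σm := le_trans (le_max_left _ _) b7
      have hL0 : (0:ℝ) < Real.log^[q] σm := by linarith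
      have h2r : 2*r ≤ ε * Real.log^[q] σm := by
        have := le_trans (le_max_right 1 (2*r/ε)) b7
        rw [div_le_iff₀ hε0] at this
        linarith [mul_comm ε (Real.log^[q] σm)]
      rw [div_le_iff₀ hL0]
      have k2 : Real.log^[p] (g.Minv (f.M σm)) ≤ r * (Real.log^[q] σm + 2) := by
        rw [hr_def, div_mul_eq_mul_div, le_div_iff₀ hrge]
        linarith [k1]
      have k3 : r * (Real.log^[q] σm + 2) = r * Real.log^[q] σm + 2*r := by ring
      have k4 : r * Real.log^[q] σm + ε * Real.log^[q] σm ≤ w * Real.log^[q] σm := by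
        have : r + ε ≤ w := hwε.le
        nlinarith
      linarith
    exact liminf_le_of_freq_le hfreq
  -- lam facts
  have hlam_le : lam ≤ rf/rg := by
    have hnb : relRittLowerOrder p q f g ≠ ⊥ := by
      intro hh; rw [hh] at hord0; exact absurd hord0 (by simp)
    have h1 := EReal.toReal_le_toReal hLAM hnb (EReal.coe_ne_top _)
    rwa [EReal.toReal_coe] at h1
  have hlam0 : 0 ≤ lam := by
    have hnt : relRittLowerOrder p q f g ≠ ⊤ :=
      (lt_of_le_of_lt hLAM (EReal.coe_lt_top _)).ne
    have h1 := EReal.toReal_le_toReal hord0 (by simp) hnt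
    rwa [EReal.toReal_zero] at h1
  have hnum_t : Filter.Tendsto (fun σ : ℝ => Real.log^[p-1] (g.Minv (f.M σ)))
      Filter.atTop Filter.atTop := (itlog_tendsto (p-1)).comp hGMf
  -- the main lower bound machine
  have LOW : ∀ D ρ' : ℝ, 0 < D → 0 < ρ' → lam ≤ rf/ρ' →
      (∀ ε : ℝ, 0 < ε → ∀ᶠ σ' : ℝ in Filter.atTop,
        Real.log^[m-1] (h.Minv (g.M σ')) ≤ (D+ε) * (Real.log^[p-1] σ') ^ ρ') →
      (((A/D) ^ (1/ρ') : ℝ) : EReal) ≤ relRittWeakType p q f g := by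
    intro D ρ' hD hρ' hlamρ hev
    refine EReal.coe_le_of_forall_lt fun w hw => ?_
    obtain ⟨ε, hε0, hεA, hwc⟩ : ∃ ε : ℝ, 0 < ε ∧ ε < A ∧ w < ((A-ε)/(D+ε)) ^ (1/ρ') := by
      have c1 : ContinuousAt (fun e : ℝ => (A-e)/(D+e)) 0 :=
        (continuousAt_const.sub continuousAt_id).div
          (continuousAt_const.add continuousAt_id) (by simpa using hD.ne')
      have c3 : ContinuousAt (fun e : ℝ => ((A-e)/(D+e)) ^ (1/ρ')) 0 := by
        apply c1.rpow_const
        left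
        simpa using (div_pos hA hD).ne'
      have h5 : ∀ᶠ e : ℝ in nhds 0, w < ((A-e)/(D+e)) ^ (1/ρ') := by
        refine c3.tendsto.eventually (eventually_gt_nhds ?_)
        simpa using hw
      have h6 : ∀ᶠ e : ℝ in nhds 0, e < A := eventually_lt_nhds hA
      have h7 : ∀ᶠ e : ℝ in nhdsWithin 0 (Set.Ioi 0),
          (w < ((A-e)/(D+e)) ^ (1/ρ') ∧ e < A) ∧ 0 < e :=
        ((h5.and h6).filter_mono nhdsWithin_le_nhds).and self_mem_nhdsWithin
      obtain ⟨e, ⟨he1, he2⟩, he3⟩ := h7.exists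
      exact ⟨e, he3, he2, he1⟩
    set cE : ℝ := ((A-ε)/(D+ε)) ^ (1/ρ') with hcE_def
    have hDε : (0:ℝ) < D + ε := by linarith
    have hcE0 : 0 ≤ cE := Real.rpow_nonneg (div_nonneg (by linarith) hDε.le) _
    rcases eq_or_lt_of_le hlam0 with hlam|hlam
    · -- lam = 0
      have hev2 : ∀ᶠ σ : ℝ in Filter.atTop,
          w ≤ Real.log^[p-1] (g.Minv (f.M σ)) / (Real.log^[q-1] σ) ^ lam := by
        filter_upwards [hnum_t.eventually_ge_atTop w] with σ h1
        rw [← hlam, Real.rpow_zero, div_one]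
        exact h1
      exact le_liminf_of_ev_le hev2
    · -- lam > 0
      have hxneg : Filter.Tendsto (fun σ : ℝ => (Real.log^[q-1] σ) ^ (-lam))
          Filter.atTop (nhds 0) :=
        (tendsto_rpow_neg_atTop hlam).comp (itlog_tendsto (q-1))
      have hδ : (0:ℝ) < cE - w := by linarith
      have hev3 : ∀ᶠ σ : ℝ in Filter.atTop, (Real.log^[q-1] σ) ^ (-lam) ≤ cE - w :=
        hxneg.eventually (eventually_le_nhds hδ)
      have hev4 : ∀ᶠ σ : ℝ in Filter.atTop,
          w ≤ Real.log^[p-1] (g.Minv (f.M σ)) / (Real.log^[q-1] σ) ^ lam := by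
        filter_upwards [hE1 ε hε0, KEY (D+ε) ρ' hDε.le hρ'.le (hev ε hε0), hq1ev,
          hnum_t.eventually_ge_atTop 0, hev3] with σ h1 h2 h3 h4 h5
        set x : ℝ := Real.log^[q-1] σ with hx_def
        set nm : ℝ := Real.log^[p-1] (g.Minv (f.M σ)) with hnm_def
        have hx0 : (0:ℝ) < x := by linarith
        have hden : (0:ℝ) < x ^ lam := Real.rpow_pos_of_pos hx0 _
        have hnm1 : (0:ℝ) ≤ nm + 1 := by linarith
        have h12 : (A-ε) * x ^ rf ≤ (D+ε) * (nm + 1) ^ ρ' := le_trans h1 h2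
        have step1 : (A-ε)/(D+ε) * x ^ rf ≤ (nm + 1) ^ ρ' := by
          rw [div_mul_eq_mul_div, div_le_iff₀ hDε, mul_comm ((nm + 1) ^ ρ') (D+ε)]
          exact h12
        have step2 : ((A-ε)/(D+ε) * x ^ rf) ^ (1/ρ') ≤ nm + 1 := by
          have h6 := Real.rpow_le_rpow
            (mul_nonneg (div_nonneg (by linarith) hDε.le) (Real.rpow_nonneg hx0.le _))
            step1 (one_div_nonneg.mpr hρ'.le)
          rwa [← Real.rpow_mul hnm1, mul_one_div, div_self hρ'.ne', Real.rpow_one] at h6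
        have step3 : ((A-ε)/(D+ε) * x ^ rf) ^ (1/ρ') = cE * x ^ (rf/ρ') := by
          rw [Real.mul_rpow (div_nonneg (by linarith) hDε.le) (Real.rpow_nonneg hx0.le _),
            ← Real.rpow_mul hx0.le, mul_one_div]
        rw [step3] at step2
        have h7 : x ^ lam ≤ x ^ (rf/ρ') := Real.rpow_le_rpow_of_exponent_le h3 hlamρ
        have h8 : 1 ≤ (cE - w) * x ^ lam := by
          have h9 : x ^ (-lam) = (x ^ lam)⁻¹ := Real.rpow_neg hx0.le lam
          have h10 := mul_le_mul_of_nonneg_right (h9 ▸ h5) hden.le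
          rwa [inv_mul_cancel₀ hden.ne'] at h10
        have h11 : cE * x ^ lam ≤ cE * x ^ (rf/ρ') := mul_le_mul_of_nonneg_left h7 hcE0
        rw [le_div_iff₀ hden]
        have e1 : w * x ^ lam = cE * x ^ lam - (cE - w) * x ^ lam := by ring
        linarith
      exact le_liminf_of_ev_le hev4
  -- conclusion
  have hres1 := LOW B rg hB hrg hlam_le hE2
  have hlam_le2 : lam ≤ rf/lg :=
    le_trans hlam_le (div_le_div_of_nonneg_left hrf.le hlg hlgrg)
  have hres2 := LOW C lg hC hlg hlam_le2 hE3
  rcases le_total ((A/B) ^ (1/rg)) ((A/C) ^ (1/lg)) with hmax|hmax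
  · rw [max_eq_right hmax]
    exact hres2
  · rw [max_eq_left hmax]
    exact hres1
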